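/- arXiv:gr-qc/0503007 — 4 statements merged into one kernel-verified Lean document; each statement's English description precedes it below -/
import Mathlib

section
/- Suppose ζ₀ is positive and smooth on an interval where ζ₀(r) + rζ₀'(r) ≠ 0, and define Δ₀(r) = (ζ₀/(ζ₀ + rζ₀'))² · r² · exp(2∫ (ζ₀'/ζ₀)·((ζ₀ - rζ₀')/(ζ₀ + rζ₀')) dr). Then Δ₀ satisfies the homogeneous ODE [r(rζ₀)']Δ₀' + [2r²ζ₀'' - 2(rζ₀)']Δ₀ = 0. -/
/-- The explicit function Δ₀(r) = (ζ₀/(ζ₀+rζ₀'))²·r²·exp(2∫(ζ₀'/ζ₀)·((ζ₀-rζ₀')/(ζ₀+rζ₀'))dr)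
satisfies the homogeneous ODE [r(rζ₀)']Δ₀' + [2r²ζ₀'' - 2(rζ₀)']Δ₀ = 0. -/
theorem pf_Delta0_solves_homogeneous
    (S : Set ℝ) (hSopen : IsOpen S) (hS : ∀ r ∈ S, 0 < r)
    (ζ₀ F : ℝ → ℝ)
    (hζ₀ : ∀ r ∈ S, ContDiffAt ℝ 2 ζ₀ r)
    (hζpos : ∀ r ∈ S, 0 < ζ₀ r)
    (hne : ∀ r ∈ S, ζ₀ r + r * deriv ζ₀ r ≠ 0)
    (hF : ∀ r ∈ S, HasDerivAt F
      ((deriv ζ₀ r / ζ₀ r) * ((ζ₀ r - r * deriv ζ₀ r) / (ζ₀ r + r * deriv ζ₀ r))) r) :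
    ∀ r ∈ S,
      r * deriv (fun s => s * ζ₀ s) r
          * deriv (fun s =>
              (ζ₀ s / (ζ₀ s + s * deriv ζ₀ s)) ^ 2 * s ^ 2 * Real.exp (2 * F s)) r
        + (2 * r ^ 2 * deriv (deriv ζ₀) r - 2 * deriv (fun s => s * ζ₀ s) r)
            * ((ζ₀ r / (ζ₀ r + r * deriv ζ₀ r)) ^ 2 * r ^ 2 * Real.exp (2 * F r)) = 0 := by
  intro r hr
  have hC : ContDiffOn ℝ 2 ζ₀ S := fun x hx => (hζ₀ x hx).contDiffWithinAt
  have hC1 : ContDiffOn ℝ 1 (deriv ζ₀) S := hC.deriv_of_isOpen hSopen le_rfl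
  have hd1 : HasDerivAt ζ₀ (deriv ζ₀ r) r :=
    ((hζ₀ r hr).differentiableAt two_ne_zero).hasDerivAt
  have hd2 : HasDerivAt (deriv ζ₀) (deriv (deriv ζ₀) r) r :=
    (((hC1.contDiffAt (hSopen.mem_nhds hr)).differentiableAt one_ne_zero)).hasDerivAt
  set z := ζ₀ r
  set z1 := deriv ζ₀ r
  set z2 := deriv (deriv ζ₀) r
  have hg : HasDerivAt (fun s => ζ₀ s + s * deriv ζ₀ s)
      (z1 + (1 * z1 + r * z2)) r := hd1.add ((hasDerivAt_id r).mul hd2)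
  have hgne : ζ₀ r + r * deriv ζ₀ r ≠ 0 := hne r hr
  have hzne : z ≠ 0 := ne_of_gt (hζpos r hr)
  have hrne : r ≠ 0 := ne_of_gt (hS r hr)
  have hu : HasDerivAt (fun s => ζ₀ s / (ζ₀ s + s * deriv ζ₀ s))
      ((z1 * (z + r * z1) - z * (z1 + (1 * z1 + r * z2))) / (z + r * z1) ^ 2) r :=
    hd1.div hg hgne
  have hmul : HasDerivAt (fun s => s * ζ₀ s) (1 * z + r * z1) r :=
    (hasDerivAt_id r).mul hd1
  have hE : HasDerivAt (fun s => Real.exp (2 * F s))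
      (Real.exp (2 * F r) * (2 * ((z1 / z) * ((z - r * z1) / (z + r * z1))))) r :=
    ((hF r hr).const_mul 2).exp
  have hsq : HasDerivAt (fun s : ℝ => s ^ 2) (2 * r ^ (2 - 1)) r := hasDerivAt_pow 2 r
  have hD : HasDerivAt (fun s =>
      (ζ₀ s / (ζ₀ s + s * deriv ζ₀ s)) ^ 2 * s ^ 2 * Real.exp (2 * F s))
      (((2 : ℕ) * (z / (z + r * z1)) ^ (2 - 1) *
          ((z1 * (z + r * z1) - z * (z1 + (1 * z1 + r * z2))) / (z + r * z1) ^ 2) * r ^ 2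
        + (z / (z + r * z1)) ^ 2 * (2 * r ^ (2 - 1))) * Real.exp (2 * F r)
        + (z / (z + r * z1)) ^ 2 * r ^ 2 *
          (Real.exp (2 * F r) * (2 * ((z1 / z) * ((z - r * z1) / (z + r * z1)))))) r :=
    ((hu.pow 2).mul hsq).mul hE
  rw [hmul.deriv, hD.deriv]
  have hEne : Real.exp (2 * F r) ≠ 0 := Real.exp_ne_zero _
  simp only [show (2:ℕ) - 1 = 1 from rfl, pow_one, Nat.cast_ofNat]
  field_simp
  ring
end

section
/- If (ζ₀, B₀) satisfies the perfect fluid equation with B₀ > 0 and ζ₀ > 0, and Z₀(r) = σ + ε·∫ r/(ζ₀(r)²·√(B₀(r))) dr for constants σ, ε, then the pair (ζ₀·Z₀, B₀) also satisfies the perfect fluid equation. -/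
/-- Theorem 2: if (ζ₀, B₀) is a perfect fluid sphere with ζ₀ > 0, B₀ > 0, and
Z₀ = σ + ε·∫ r/(ζ₀²√B₀) dr, then (ζ₀·Z₀, B₀) is also a perfect fluid sphere. -/
theorem pf_theorem2
    (S : Set ℝ) (hSopen : IsOpen S) (hS : ∀ r ∈ S, 0 < r)
    (ζ₀ B₀ F : ℝ → ℝ) (σ ε : ℝ)
    (hζ₀ : ∀ r ∈ S, ContDiffAt ℝ 2 ζ₀ r)
    (hB₀ : ∀ r ∈ S, DifferentiableAt ℝ B₀ r)
    (hζpos : ∀ r ∈ S, 0 < ζ₀ r)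
    (hBpos : ∀ r ∈ S, 0 < B₀ r)
    (hF : ∀ r ∈ S, HasDerivAt F (r / (ζ₀ r ^ 2 * Real.sqrt (B₀ r))) r)
    (hpf : ∀ r ∈ S,
      2 * r ^ 2 * B₀ r * deriv (deriv ζ₀) r
        + (r ^ 2 * deriv B₀ r - 2 * r * B₀ r) * deriv ζ₀ r
        + (r * deriv B₀ r - 2 * B₀ r + 2) * ζ₀ r = 0) :
    ∀ r ∈ S,
      2 * r ^ 2 * B₀ r * deriv (deriv (fun s => ζ₀ s * (σ + ε * F s))) r
        + (r ^ 2 * deriv B₀ r - 2 * r * B₀ r) * deriv (fun s => ζ₀ s * (σ + ε * F s)) r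
        + (r * deriv B₀ r - 2 * B₀ r + 2) * (ζ₀ r * (σ + ε * F r)) = 0 := by
  intro r hr
  have hrS : S ∈ nhds r := hSopen.mem_nhds hr
  have hcd : ContDiffOn ℝ 2 ζ₀ S := fun s hs => (hζ₀ s hs).contDiffWithinAt
  have hd1 : ContDiffOn ℝ 1 (deriv ζ₀) S := hcd.deriv_of_isOpen hSopen (by norm_num)
  have hζd : ∀ s ∈ S, DifferentiableAt ℝ ζ₀ s := fun s hs =>
    (hζ₀ s hs).differentiableAt (by norm_num)
  have hζd' : ∀ s ∈ S, DifferentiableAt ℝ (deriv ζ₀) s := fun s hs =>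
    ((hd1 s hs).differentiableWithinAt one_ne_zero).differentiableAt (hSopen.mem_nhds hs)
  have hZ : ∀ s ∈ S, HasDerivAt (fun t => σ + ε * F t)
      (ε * (s / (ζ₀ s ^ 2 * Real.sqrt (B₀ s)))) s := fun s hs =>
    ((hF s hs).const_mul ε).const_add σ
  have hg : ∀ s ∈ S, HasDerivAt (fun t => ζ₀ t * (σ + ε * F t))
      (deriv ζ₀ s * (σ + ε * F s) + ζ₀ s * (ε * (s / (ζ₀ s ^ 2 * Real.sqrt (B₀ s))))) s :=
    fun s hs => ((hζd s hs).hasDerivAt).mul (hZ s hs)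
  have hev : deriv (fun s => ζ₀ s * (σ + ε * F s)) =ᶠ[nhds r]
      (fun s => deriv ζ₀ s * (σ + ε * F s) + ζ₀ s * (ε * (s / (ζ₀ s ^ 2 * Real.sqrt (B₀ s))))) := by
    filter_upwards [hrS] with s hs using (hg s hs).deriv
  rw [hev.deriv_eq, (hg r hr).deriv]
  have hapos := hζpos r hr
  have hbpos := hBpos r hr
  have hqpos : 0 < Real.sqrt (B₀ r) := Real.sqrt_pos.mpr hbpos
  have hane : ζ₀ r ≠ 0 := ne_of_gt hapos
  have hqne : Real.sqrt (B₀ r) ≠ 0 := ne_of_gt hqpos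
  have hsq : HasDerivAt (fun t => Real.sqrt (B₀ t))
      (1 / (2 * Real.sqrt (B₀ r)) * deriv B₀ r) r :=
    (Real.hasDerivAt_sqrt (ne_of_gt hbpos)).comp r ((hB₀ r hr).hasDerivAt)
  have hden : HasDerivAt (fun s => ζ₀ s ^ 2 * Real.sqrt (B₀ s))
      ((2 * ζ₀ r ^ 1 * deriv ζ₀ r) * Real.sqrt (B₀ r)
        + ζ₀ r ^ 2 * (1 / (2 * Real.sqrt (B₀ r)) * deriv B₀ r)) r :=
    (((hζd r hr).hasDerivAt).pow 2).mul hsq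
  have hdenne : ζ₀ r ^ 2 * Real.sqrt (B₀ r) ≠ 0 := by positivity
  have hquot : HasDerivAt (fun s => s / (ζ₀ s ^ 2 * Real.sqrt (B₀ s)))
      ((1 * (ζ₀ r ^ 2 * Real.sqrt (B₀ r)) - r * ((2 * ζ₀ r ^ 1 * deriv ζ₀ r) * Real.sqrt (B₀ r)
        + ζ₀ r ^ 2 * (1 / (2 * Real.sqrt (B₀ r)) * deriv B₀ r)))
        / (ζ₀ r ^ 2 * Real.sqrt (B₀ r)) ^ 2) r :=
    (hasDerivAt_id' r).div hden hdenne
  have hg'd : HasDerivAt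
      (fun s => deriv ζ₀ s * (σ + ε * F s) + ζ₀ s * (ε * (s / (ζ₀ s ^ 2 * Real.sqrt (B₀ s)))))
      (deriv (deriv ζ₀) r * (σ + ε * F r)
        + deriv ζ₀ r * (ε * (r / (ζ₀ r ^ 2 * Real.sqrt (B₀ r))))
        + (deriv ζ₀ r * (ε * (r / (ζ₀ r ^ 2 * Real.sqrt (B₀ r))))
          + ζ₀ r * (ε * ((1 * (ζ₀ r ^ 2 * Real.sqrt (B₀ r))
              - r * ((2 * ζ₀ r ^ 1 * deriv ζ₀ r) * Real.sqrt (B₀ r)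
                + ζ₀ r ^ 2 * (1 / (2 * Real.sqrt (B₀ r)) * deriv B₀ r)))
              / (ζ₀ r ^ 2 * Real.sqrt (B₀ r)) ^ 2)))) r :=
    (((hζd' r hr).hasDerivAt).mul (hZ r hr)).add
      (((hζd r hr).hasDerivAt).mul (hquot.const_mul ε))
  rw [hg'd.deriv]
  have key := hpf r hr
  have hq2 : Real.sqrt (B₀ r) ^ 2 = B₀ r := Real.sq_sqrt (le_of_lt hbpos)
  have extra : 2 * r ^ 2 * B₀ r *
        (deriv ζ₀ r * (ε * (r / (ζ₀ r ^ 2 * Real.sqrt (B₀ r))))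
          + (deriv ζ₀ r * (ε * (r / (ζ₀ r ^ 2 * Real.sqrt (B₀ r))))
            + ζ₀ r * (ε * ((1 * (ζ₀ r ^ 2 * Real.sqrt (B₀ r))
                - r * ((2 * ζ₀ r ^ 1 * deriv ζ₀ r) * Real.sqrt (B₀ r)
                  + ζ₀ r ^ 2 * (1 / (2 * Real.sqrt (B₀ r)) * deriv B₀ r)))
                / (ζ₀ r ^ 2 * Real.sqrt (B₀ r)) ^ 2))))
      + (r ^ 2 * deriv B₀ r - 2 * r * B₀ r) *
        (ζ₀ r * (ε * (r / (ζ₀ r ^ 2 * Real.sqrt (B₀ r))))) = 0 := by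
    field_simp
    ring_nf
    linear_combination (r ^ 3 * ε * ζ₀ r * deriv B₀ r) * hq2
  linear_combination (σ + ε * F r) * key + extra
end

section
/- If ζ₀ > 0 and B₀ > 0 satisfy the perfect fluid equation, then a function of the form ζ₁ = ζ₀·Z₀ satisfies the same equation (with the same B₀) if and only if Z₀ satisfies (r²ζ₀B₀' + 4r²ζ₀'B₀ - 2rζ₀B₀)Z₀' + 2r²ζ₀B₀·Z₀'' = 0. -/
open Filter Topology

private lemma aux_deriv_facts {f : ℝ → ℝ} {x : ℝ} (h : ContDiffAt ℝ 2 f x) :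
    (∀ᶠ y in 𝓝 x, DifferentiableAt ℝ f y) ∧ DifferentiableAt ℝ (deriv f) x := by
  obtain ⟨u, hu, hfu⟩ := h.contDiffOn le_rfl (by simp)
  obtain ⟨t, htu, hto, hxt⟩ := mem_nhds_iff.1 hu
  have h2 : ContDiffOn ℝ 2 f t := hfu.mono htu
  have h2' : ContDiffOn ℝ ((1 : ℕ) + 1) f t := by
    exact_mod_cast h2
  rw [contDiffOn_succ_iff_deriv_of_isOpen hto] at h2'
  constructor
  · filter_upwards [hto.mem_nhds hxt] with y hy
    exact (h2'.1 y hy).differentiableAt (hto.mem_nhds hy)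
  · exact ((h2'.2.2.differentiableOn (by norm_num)) x hxt).differentiableAt
      (hto.mem_nhds hxt)

/-- Reduction of order: given a perfect fluid sphere (ζ₀, B₀) with ζ₀, B₀ > 0,
ζ₁ = ζ₀·Z₀ satisfies the perfect fluid equation iff Z₀ satisfies
(r²ζ₀B₀' + 4r²ζ₀'B₀ - 2rζ₀B₀)Z₀' + 2r²ζ₀B₀·Z₀'' = 0. -/
theorem pf_reduction_of_order
    (S : Set ℝ) (hSopen : IsOpen S) (hS : ∀ r ∈ S, 0 < r)
    (ζ₀ B₀ Z₀ : ℝ → ℝ)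
    (hζ₀ : ∀ r ∈ S, ContDiffAt ℝ 2 ζ₀ r)
    (hZ₀ : ∀ r ∈ S, ContDiffAt ℝ 2 Z₀ r)
    (hB₀ : ∀ r ∈ S, DifferentiableAt ℝ B₀ r)
    (hζpos : ∀ r ∈ S, 0 < ζ₀ r)
    (hBpos : ∀ r ∈ S, 0 < B₀ r)
    (hpf : ∀ r ∈ S,
      2 * r ^ 2 * B₀ r * deriv (deriv ζ₀) r
        + (r ^ 2 * deriv B₀ r - 2 * r * B₀ r) * deriv ζ₀ r
        + (r * deriv B₀ r - 2 * B₀ r + 2) * ζ₀ r = 0) :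
    (∀ r ∈ S,
      2 * r ^ 2 * B₀ r * deriv (deriv (fun s => ζ₀ s * Z₀ s)) r
        + (r ^ 2 * deriv B₀ r - 2 * r * B₀ r) * deriv (fun s => ζ₀ s * Z₀ s) r
        + (r * deriv B₀ r - 2 * B₀ r + 2) * (ζ₀ r * Z₀ r) = 0)
    ↔ (∀ r ∈ S,
      (r ^ 2 * ζ₀ r * deriv B₀ r + 4 * r ^ 2 * deriv ζ₀ r * B₀ r - 2 * r * ζ₀ r * B₀ r)
          * deriv Z₀ r
        + 2 * r ^ 2 * ζ₀ r * B₀ r * deriv (deriv Z₀) r = 0) := by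
  have key : ∀ r ∈ S,
      deriv (fun s => ζ₀ s * Z₀ s) r = deriv ζ₀ r * Z₀ r + ζ₀ r * deriv Z₀ r ∧
      deriv (deriv (fun s => ζ₀ s * Z₀ s)) r
        = deriv (deriv ζ₀) r * Z₀ r + 2 * (deriv ζ₀ r * deriv Z₀ r)
          + ζ₀ r * deriv (deriv Z₀) r := by
    intro r hr
    obtain ⟨hζev, hζd2⟩ := aux_deriv_facts (hζ₀ r hr)
    obtain ⟨hZev, hZd2⟩ := aux_deriv_facts (hZ₀ r hr)
    have heq : deriv (fun s => ζ₀ s * Z₀ s)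
        =ᶠ[𝓝 r] fun s => deriv ζ₀ s * Z₀ s + ζ₀ s * deriv Z₀ s := by
      filter_upwards [hζev, hZev] with y hy1 hy2
      exact deriv_mul hy1 hy2
    have hζdr : DifferentiableAt ℝ ζ₀ r := hζev.self_of_nhds
    have hZdr : DifferentiableAt ℝ Z₀ r := hZev.self_of_nhds
    refine ⟨deriv_mul hζdr hZdr, ?_⟩
    rw [heq.deriv_eq]
    rw [deriv_fun_add ((hζd2.fun_mul hZdr)) (hζdr.fun_mul hZd2),
      deriv_fun_mul hζd2 hZdr, deriv_fun_mul hζdr hZd2]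
    ring
  constructor
  · intro h r hr
    obtain ⟨e1, e2⟩ := key r hr
    have h1 := h r hr
    rw [e1, e2] at h1
    linear_combination h1 - Z₀ r * hpf r hr
  · intro h r hr
    obtain ⟨e1, e2⟩ := key r hr
    rw [e1, e2]
    linear_combination h r hr + Z₀ r * hpf r hr
end

section
/- Full decomposition identity: D(ζ₀Z₀, B₀+Δ₀) = Z₀·D(ζ₀,B₀) + Z₀·D₁(ζ₀;Δ₀) + D₁₂(ζ₀;Z₀,Δ₀) + D₂(ζ₀,B₀;Z₀). In particular, if both (ζ₀,B₀) and (ζ₀Z₀, B₀+Δ₀) satisfy the perfect fluid equation D = 0, then Z₀·D₁(ζ₀;Δ₀) + D₁₂(ζ₀;Z₀,Δ₀) + D₂(ζ₀,B₀;Z₀) = 0. -/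
/-- D(ζ,B) := [r(rζ)']B' + [2r²ζ'' - 2(rζ)']B + 2ζ. -/
noncomputable def Dop (ζ B : ℝ → ℝ) (r : ℝ) : ℝ :=
  r * deriv (fun s => s * ζ s) r * deriv B r
    + (2 * r ^ 2 * deriv (deriv ζ) r - 2 * deriv (fun s => s * ζ s) r) * B r
    + 2 * ζ r

/-- D₁(ζ;Δ) := [r(rζ)']Δ' + [2r²ζ'' - 2(rζ)']Δ. -/
noncomputable def D1 (ζ Δ : ℝ → ℝ) (r : ℝ) : ℝ :=
  r * deriv (fun s => s * ζ s) r * deriv Δ r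
    + (2 * r ^ 2 * deriv (deriv ζ) r - 2 * deriv (fun s => s * ζ s) r) * Δ r

/-- D₂(ζ,B;Z) := (r²ζB' + 4r²ζ'B - 2rζB)Z' + 2r²ζB·Z''. -/
noncomputable def D2 (ζ B Z : ℝ → ℝ) (r : ℝ) : ℝ :=
  (r ^ 2 * ζ r * deriv B r + 4 * r ^ 2 * deriv ζ r * B r - 2 * r * ζ r * B r) * deriv Z r
    + 2 * r ^ 2 * ζ r * B r * deriv (deriv Z) r

/-- D₁₂(ζ;Z,Δ) := r²ζZ'Δ' + [2r²ζZ'' + 4r²ζ'Z' - 2rζZ']Δ. -/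
noncomputable def D12 (ζ Z Δ : ℝ → ℝ) (r : ℝ) : ℝ :=
  r ^ 2 * ζ r * deriv Z r * deriv Δ r
    + (2 * r ^ 2 * ζ r * deriv (deriv Z) r + 4 * r ^ 2 * deriv ζ r * deriv Z r
        - 2 * r * ζ r * deriv Z r) * Δ r

lemma diff_deriv_of_contDiffAt {f : ℝ → ℝ} {r : ℝ} (hf : ContDiffAt ℝ 2 f r) :
    DifferentiableAt ℝ (deriv f) r := by
  have h : DifferentiableAt ℝ (fderiv ℝ f) r :=
    (hf.fderiv_right (m := 1) (by norm_num)).differentiableAt one_ne_zero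
  have heq : deriv f = fun x => fderiv ℝ f x 1 := rfl
  rw [heq]
  exact h.clm_apply (differentiableAt_const 1)

/-- Full decomposition identity:
D(ζ₀Z₀, B₀+Δ₀) = Z₀·D(ζ₀,B₀) + Z₀·D₁(ζ₀;Δ₀) + D₁₂(ζ₀;Z₀,Δ₀) + D₂(ζ₀,B₀;Z₀);
in particular, if both (ζ₀,B₀) and (ζ₀Z₀,B₀+Δ₀) are perfect fluid spheres, then
Z₀·D₁(ζ₀;Δ₀) + D₁₂(ζ₀;Z₀,Δ₀) + D₂(ζ₀,B₀;Z₀) = 0. -/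
theorem pf_full_decomposition
    (S : Set ℝ) (hSopen : IsOpen S) (hS : ∀ r ∈ S, 0 < r)
    (ζ₀ B₀ Z₀ Δ₀ : ℝ → ℝ)
    (hζ₀ : ∀ r ∈ S, ContDiffAt ℝ 2 ζ₀ r)
    (hZ₀ : ∀ r ∈ S, ContDiffAt ℝ 2 Z₀ r)
    (hB₀ : ∀ r ∈ S, DifferentiableAt ℝ B₀ r)
    (hΔ₀ : ∀ r ∈ S, DifferentiableAt ℝ Δ₀ r) :
    (∀ r ∈ S,
      Dop (fun s => ζ₀ s * Z₀ s) (fun s => B₀ s + Δ₀ s) r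
        = Z₀ r * Dop ζ₀ B₀ r + Z₀ r * D1 ζ₀ Δ₀ r + D12 ζ₀ Z₀ Δ₀ r + D2 ζ₀ B₀ Z₀ r) ∧
    ((∀ r ∈ S, Dop ζ₀ B₀ r = 0) →
      (∀ r ∈ S, Dop (fun s => ζ₀ s * Z₀ s) (fun s => B₀ s + Δ₀ s) r = 0) →
      ∀ r ∈ S, Z₀ r * D1 ζ₀ Δ₀ r + D12 ζ₀ Z₀ Δ₀ r + D2 ζ₀ B₀ Z₀ r = 0) := by
  have main : ∀ r ∈ S,
      Dop (fun s => ζ₀ s * Z₀ s) (fun s => B₀ s + Δ₀ s) r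
        = Z₀ r * Dop ζ₀ B₀ r + Z₀ r * D1 ζ₀ Δ₀ r + D12 ζ₀ Z₀ Δ₀ r + D2 ζ₀ B₀ Z₀ r := by
    intro r hr
    have hζ := hζ₀ r hr
    have hZ := hZ₀ r hr
    have hζd : DifferentiableAt ℝ ζ₀ r := hζ.differentiableAt two_ne_zero
    have hZd : DifferentiableAt ℝ Z₀ r := hZ.differentiableAt two_ne_zero
    have hζ' : DifferentiableAt ℝ (deriv ζ₀) r := diff_deriv_of_contDiffAt hζ
    have hZ' : DifferentiableAt ℝ (deriv Z₀) r := diff_deriv_of_contDiffAt hZ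
    -- deriv of B+Δ
    have hBΔ : deriv (fun s => B₀ s + Δ₀ s) r = deriv B₀ r + deriv Δ₀ r :=
      deriv_add (hB₀ r hr) (hΔ₀ r hr)
    -- deriv of s * ζ₀ s
    have h1 : deriv (fun s => s * ζ₀ s) r = ζ₀ r + r * deriv ζ₀ r := by
      rw [deriv_fun_mul differentiableAt_fun_id hζd, deriv_id'']; ring
    -- deriv of s * (ζ₀ s * Z₀ s)
    have h2 : deriv (fun s => s * (ζ₀ s * Z₀ s)) r
        = ζ₀ r * Z₀ r + r * (deriv ζ₀ r * Z₀ r + ζ₀ r * deriv Z₀ r) := by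
      rw [deriv_fun_mul differentiableAt_fun_id (hζd.fun_mul hZd), deriv_id'',
        deriv_fun_mul hζd hZd]; ring
    -- second derivative of ζ₀ Z₀
    have hEv : deriv (fun s => ζ₀ s * Z₀ s)
        =ᶠ[nhds r] fun x => deriv ζ₀ x * Z₀ x + ζ₀ x * deriv Z₀ x := by
      filter_upwards [hζ.eventually (by norm_num), hZ.eventually (by norm_num)]
        with x hx hx'
      exact deriv_mul (hx.differentiableAt two_ne_zero) (hx'.differentiableAt two_ne_zero)
    have h3 : deriv (deriv (fun s => ζ₀ s * Z₀ s)) r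
        = deriv (deriv ζ₀) r * Z₀ r + deriv ζ₀ r * deriv Z₀ r
          + (deriv ζ₀ r * deriv Z₀ r + ζ₀ r * deriv (deriv Z₀) r) := by
      rw [hEv.deriv_eq, deriv_fun_add (hζ'.fun_mul hZd) (hζd.fun_mul hZ'),
        deriv_fun_mul hζ' hZd, deriv_fun_mul hζd hZ']
    simp only [Dop, D1, D2, D12]
    rw [hBΔ, h1, h2, h3]
    ring
  refine ⟨main, fun hpf hpf' r hr => ?_⟩
  have := main r hr
  rw [hpf r hr, hpf' r hr] at this
  linarith
end
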